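/- Let f(z) = Σ_{k≥0} a_k z^{n_k} where there exist α > 1, β > 1 with n_k^α ≤ n_{k+1} ≤ n_k^{αβ} for all k, and suppose lim_{k→∞} |a_k|/log(n_k) = 0. Then f is analytic on the unit disk and lim_{|z|→1^-} |f(z)|/log(e/(1-|z|)) = 0. -/

import Mathlib

set_option maxHeartbeats 1000000

open Metric Filter

section AuxLemmas

variable {n : ℕ → ℕ} {α β : ℝ}

lemma aux_strictMono (hα : 1 < α) (hn2 : ∀ k, 2 ≤ n k)
    (hgap1 : ∀ k, ((n k : ℝ)) ^ α ≤ (n (k + 1) : ℝ)) : StrictMono n := by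
  apply strictMono_nat_of_lt_succ
  intro k
  have h1 : (1 : ℝ) < (n k : ℝ) := by
    have := hn2 k
    exact_mod_cast lt_of_lt_of_le one_lt_two (by exact_mod_cast this)
  have h2 : ((n k : ℝ)) ^ (1 : ℝ) < ((n k : ℝ)) ^ α :=
    Real.rpow_lt_rpow_of_exponent_lt h1 hα
  rw [Real.rpow_one] at h2
  exact_mod_cast h2.trans_le (hgap1 k)

lemma aux_ge (hs : StrictMono n) (h0 : 2 ≤ n 0) : ∀ k, k + 2 ≤ n k := by
  intro k
  induction k with
  | zero => simpa using h0
  | succ k ih =>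
    have h : n k < n (k + 1) := hs (by omega)
    omega

lemma aux_summable (hs : StrictMono n) {r : ℝ} (h0 : 0 ≤ r) (h1 : r < 1) :
    Summable fun k => (n k : ℝ) * r ^ n k := by
  have h : Summable fun m : ℕ => (m : ℝ) ^ 1 * r ^ m :=
    summable_pow_mul_geometric_of_norm_lt_one 1 (by rwa [Real.norm_eq_abs, abs_of_nonneg h0])
  have := h.comp_injective hs.injective
  simpa [Function.comp_def, pow_one] using this

lemma aux_summable_log (hs : StrictMono n) (hn2 : ∀ k, 2 ≤ n k) {r : ℝ} (h0 : 0 ≤ r)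
    (h1 : r < 1) : Summable fun k => Real.log (n k) * r ^ n k := by
  refine Summable.of_nonneg_of_le (fun k => ?_) (fun k => ?_) (aux_summable hs h0 h1)
  · refine mul_nonneg (Real.log_nonneg ?_) (pow_nonneg h0 _)
    have := hn2 k; exact_mod_cast le_trans (by norm_num) this
  · refine mul_le_mul_of_nonneg_right ?_ (pow_nonneg h0 _)
    have hp : (0 : ℝ) < (n k : ℝ) := by
      have := hn2 k; exact_mod_cast lt_of_lt_of_le two_pos this
    linarith [Real.log_le_sub_one_of_pos hp]

lemma aux_key (n : ℕ → ℕ) (α β : ℝ) (hα : 1 < α) (hβ : 1 < β) (hn2 : ∀ k, 2 ≤ n k)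
    (hgap : ∀ k, ((n k : ℝ)) ^ α ≤ (n (k + 1) : ℝ) ∧ (n (k + 1) : ℝ) ≤ ((n k : ℝ)) ^ (α * β)) :
    ∃ C : ℝ, 0 < C ∧ ∀ r : ℝ, 0 ≤ r → r < 1 →
      ∑' k, Real.log (n k) * r ^ n k ≤ C * Real.log (Real.exp 1 / (1 - r)) := by
  have hα0 : (0 : ℝ) < α := by linarith
  have hαβ1 : (1 : ℝ) < α * β := by nlinarith
  have hαβ0 : (0 : ℝ) < α * β := by linarith
  have hs : StrictMono n := aux_strictMono hα hn2 fun k => (hgap k).1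
  have hge : ∀ k, k + 2 ≤ n k := aux_ge hs (hn2 0)
  have hnpos : ∀ k, (0 : ℝ) < (n k : ℝ) := fun k => by
    have := hn2 k; exact_mod_cast lt_of_lt_of_le two_pos this
  have hn1 : ∀ k, (1 : ℝ) < (n k : ℝ) := fun k => by
    have := hn2 k; exact_mod_cast lt_of_lt_of_le one_lt_two (by exact_mod_cast this)
  set L : ℕ → ℝ := fun k => Real.log (n k) with hLdef
  have hLpos : ∀ k, 0 < L k := fun k => Real.log_pos (hn1 k)
  have hLstep : ∀ k, α * L k ≤ L (k + 1) := by
    intro k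
    have h := Real.log_le_log (Real.rpow_pos_of_pos (hnpos k) α) (hgap k).1
    rwa [Real.log_rpow (hnpos k)] at h
  have hLstep' : ∀ k, L (k + 1) ≤ (α * β) * L k := by
    intro k
    have h := Real.log_le_log (hnpos (k + 1)) (hgap k).2
    rwa [Real.log_rpow (hnpos k)] at h
  have hLgeom : ∀ k j, α ^ j * L k ≤ L (k + j) := by
    intro k j
    induction j with
    | zero => simp
    | succ j ih =>
      have h1 : α ^ (j + 1) * L k = α * (α ^ j * L k) := by ring
      calc α ^ (j + 1) * L k = α * (α ^ j * L k) := h1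
        _ ≤ α * L (k + j) := by nlinarith
        _ ≤ L (k + j + 1) := hLstep (k + j)
  have hLgeom' : ∀ k j, L (j + k) ≤ (α * β) ^ j * L k := by
    intro k j
    induction j with
    | zero => simp
    | succ j ih =>
      have h2 : (0 : ℝ) < (α * β) ^ j := pow_pos hαβ0 j
      calc L (j + 1 + k) = L ((j + k) + 1) := by rw [Nat.succ_add]
        _ ≤ (α * β) * L (j + k) := hLstep' (j + k)
        _ ≤ (α * β) * ((α * β) ^ j * L k) := by nlinarith
        _ = (α * β) ^ (j + 1) * L k := by ring
  have hngeom : ∀ k j, ((n k : ℝ)) ^ (α ^ j) ≤ ((n (j + k) : ℝ)) := by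
    intro k j
    induction j with
    | zero => simp
    | succ j ih =>
      have h1 : ((n k : ℝ)) ^ (α ^ (j + 1)) = (((n k : ℝ)) ^ (α ^ j)) ^ α := by
        rw [← Real.rpow_mul (hnpos k).le, pow_succ]
      calc ((n k : ℝ)) ^ (α ^ (j + 1)) = (((n k : ℝ)) ^ (α ^ j)) ^ α := h1
        _ ≤ ((n (j + k) : ℝ)) ^ α :=
            Real.rpow_le_rpow (Real.rpow_nonneg (hnpos k).le _) ih hα0.le
        _ ≤ (n ((j + k) + 1) : ℝ) := (hgap (j + k)).1
        _ = (n (j + 1 + k) : ℝ) := by rw [Nat.succ_add]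
  -- the geometric-type constant D
  set s : ℝ := Real.log (2 * (α * β)) with hsdef
  have hs0 : 0 < s := Real.log_pos (by nlinarith)
  set c₀ : ℝ := ((α - 1) * Real.log 2) ^ 2 / 4 with hc₀def
  have hc₀pos : 0 < c₀ := by
    have h1 : 0 < (α - 1) * Real.log 2 := mul_pos (by linarith) (Real.log_pos one_lt_two)
    positivity
  set m : ℝ := s ^ 2 / (4 * c₀) with hmdef
  set D : ℝ := Real.exp m with hDdef
  have hDpos : 0 < D := Real.exp_pos m
  have key2 : ∀ j : ℕ, (j : ℝ) * s - m ≤ (2 : ℝ) ^ (α ^ j - 1) := by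
    intro j
    have h1 : (j : ℝ) * (α - 1) ≤ α ^ j - 1 := by
      have h := one_add_mul_le_pow (a := α - 1) (by linarith) j
      have he : (1 : ℝ) + (α - 1) = α := by ring
      rw [he] at h; linarith
    have h2 : (2 : ℝ) ^ ((j : ℝ) * (α - 1)) ≤ (2 : ℝ) ^ (α ^ j - 1) :=
      Real.rpow_le_rpow_of_exponent_le one_le_two h1
    set x : ℝ := (j : ℝ) * (α - 1) * Real.log 2 with hxdef
    have hx0 : 0 ≤ x :=
      mul_nonneg (mul_nonneg (Nat.cast_nonneg j) (by linarith)) (Real.log_nonneg one_le_two)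
    have h3 : (2 : ℝ) ^ ((j : ℝ) * (α - 1)) = Real.exp x := by
      rw [Real.rpow_def_of_pos two_pos, hxdef]; ring_nf
    have h4 : x ^ 2 / 4 ≤ Real.exp x := by
      have h5 : x / 2 ≤ Real.exp (x / 2) := by linarith [Real.add_one_le_exp (x / 2)]
      have h6 : (x / 2) ^ 2 ≤ (Real.exp (x / 2)) ^ 2 := by
        apply pow_le_pow_left₀ (by linarith) h5
      have h7 : Real.exp (x / 2) ^ 2 = Real.exp x := by
        rw [← Real.exp_nat_mul]; congr 1; push_cast; ring
      calc x ^ 2 / 4 = (x / 2) ^ 2 := by ring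
        _ ≤ Real.exp (x / 2) ^ 2 := h6
        _ = Real.exp x := h7
    have h7 : x ^ 2 / 4 = (j : ℝ) ^ 2 * c₀ := by rw [hxdef, hc₀def]; ring
    have h8 : (j : ℝ) * s - m ≤ (j : ℝ) ^ 2 * c₀ := by
      have h4c : (0 : ℝ) < 4 * c₀ := by linarith
      have h9 : ((j : ℝ) * s - (j : ℝ) ^ 2 * c₀) * (4 * c₀) ≤ s ^ 2 := by
        nlinarith [sq_nonneg (2 * c₀ * (j : ℝ) - s)]
      have h10 : (j : ℝ) * s - (j : ℝ) ^ 2 * c₀ ≤ s ^ 2 / (4 * c₀) :=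
        (le_div_iff₀ h4c).mpr h9
      rw [hmdef]; linarith
    calc (j : ℝ) * s - m ≤ (j : ℝ) ^ 2 * c₀ := h8
      _ = x ^ 2 / 4 := h7.symm
      _ ≤ Real.exp x := h4
      _ = (2 : ℝ) ^ ((j : ℝ) * (α - 1)) := h3.symm
      _ ≤ (2 : ℝ) ^ (α ^ j - 1) := h2
  have hD : ∀ j : ℕ, (α * β) ^ j * Real.exp (-(2 : ℝ) ^ (α ^ j - 1)) ≤ D * (1 / 2) ^ j := by
    intro j
    have h1 : Real.exp (-(2 : ℝ) ^ (α ^ j - 1)) ≤ Real.exp (m - (j : ℝ) * s) :=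
      Real.exp_le_exp.mpr (by linarith [key2 j])
    have h2 : Real.exp (m - (j : ℝ) * s) = D * ((2 * (α * β)) ^ j)⁻¹ := by
      rw [Real.exp_sub, Real.exp_nat_mul, Real.exp_log (by linarith), hDdef, div_eq_mul_inv]
    have h3 : ((α * β) : ℝ) ^ j ≠ 0 := pow_ne_zero _ (by linarith)
    calc (α * β) ^ j * Real.exp (-(2 : ℝ) ^ (α ^ j - 1))
        ≤ (α * β) ^ j * (D * ((2 * (α * β)) ^ j)⁻¹) :=
          mul_le_mul_of_nonneg_left (h1.trans_eq h2) (pow_nonneg hαβ0.le j)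
      _ = D * (1 / 2) ^ j := by
          rw [mul_pow]
          field_simp
          rw [← mul_pow, ← mul_pow]; congr 1; ring
  refine ⟨(1 - 1 / α)⁻¹ + (α * β + L 0) * (2 * D), ?_, ?_⟩
  · have h1 : (0 : ℝ) < 1 - 1 / α := by
      have : 1 / α < 1 := (div_lt_one hα0).mpr hα
      linarith
    have h2 : (0 : ℝ) < α * β + L 0 := by linarith [hLpos 0]
    have := hDpos
    positivity
  intro r hr0 hr1
  set t : ℝ := 1 - r with htdef
  have ht0 : 0 < t := by rw [htdef]; linarith
  have ht1 : t ≤ 1 := by rw [htdef]; linarith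
  set X : ℝ := Real.log (Real.exp 1 / t) with hXdef
  have hX1 : 1 ≤ X := by
    have h1 : Real.exp 1 ≤ Real.exp 1 / t := by
      rw [le_div_iff₀ ht0]; nlinarith [Real.exp_pos 1]
    calc (1 : ℝ) = Real.log (Real.exp 1) := (Real.log_exp 1).symm
      _ ≤ X := Real.log_le_log (Real.exp_pos 1) h1
  have hXpos : 0 < X := lt_of_lt_of_le one_pos hX1
  obtain ⟨M₀, hM₀⟩ := exists_nat_gt (1 / t)
  have hex : ∃ k, (1 : ℝ) / t < (n k : ℝ) := by
    refine ⟨M₀, lt_of_lt_of_le hM₀ ?_⟩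
    have := hge M₀
    exact_mod_cast le_trans (by omega) this
  obtain ⟨K, hKspec, hKmin⟩ : ∃ K : ℕ, (1 : ℝ) / t < (n K : ℝ) ∧
      ∀ k, k < K → (n k : ℝ) ≤ 1 / t :=
    ⟨Nat.find hex, Nat.find_spec hex, fun k hk => not_lt.mp (Nat.find_min hex hk)⟩
  have hinvt : 1 / t ≤ Real.exp 1 / t := by
    gcongr
    nlinarith [Real.add_one_le_exp (1 : ℝ)]
  have hLlt : ∀ k, k < K → L k ≤ X := by
    intro k hk
    calc L k ≤ Real.log (1 / t) := Real.log_le_log (hnpos k) (hKmin k hk)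
      _ ≤ X := Real.log_le_log (by positivity) hinvt
  have hrexp : ∀ N : ℕ, r ^ N ≤ Real.exp (-(t * N)) := by
    intro N
    have h1 : r ≤ Real.exp (-t) := by nlinarith [Real.add_one_le_exp (-t)]
    calc r ^ N ≤ Real.exp (-t) ^ N := pow_le_pow_left₀ hr0 h1 N
      _ = Real.exp (-(t * N)) := by rw [← Real.exp_nat_mul]; ring_nf
  have hsum : Summable fun k => L k * r ^ n k := aux_summable_log hs hn2 hr0 hr1
  have hsplit := Summable.sum_add_tsum_nat_add K hsum
  -- head bound
  have hq0 : (0 : ℝ) ≤ 1 / α := by positivity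
  have hq1 : 1 / α < 1 := (div_lt_one hα0).mpr hα
  have hhead : ∑ i ∈ Finset.range K, L i * r ^ n i ≤ (1 - 1 / α)⁻¹ * X := by
    have hterm : ∀ i ∈ Finset.range K, L i * r ^ n i ≤ X * (1 / α) ^ (K - 1 - i) := by
      intro i hi
      rw [Finset.mem_range] at hi
      have h1 : r ^ n i ≤ 1 := pow_le_one₀ hr0 hr1.le
      have h2 : α ^ (K - 1 - i) * L i ≤ L (i + (K - 1 - i)) := hLgeom i (K - 1 - i)
      have h3 : i + (K - 1 - i) = K - 1 := by omega
      rw [h3] at h2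
      have h4 : L (K - 1) ≤ X := hLlt (K - 1) (by omega)
      have hαe : (0 : ℝ) < α ^ (K - 1 - i) := pow_pos hα0 _
      have h5 : L i ≤ X * (1 / α) ^ (K - 1 - i) := by
        rw [one_div, inv_pow, ← div_eq_mul_inv, le_div_iff₀ hαe]
        nlinarith [h2, h4]
      calc L i * r ^ n i ≤ L i * 1 := mul_le_mul_of_nonneg_left h1 (hLpos i).le
        _ = L i := mul_one _
        _ ≤ X * (1 / α) ^ (K - 1 - i) := h5
    have hgeo : Summable fun i : ℕ => (1 / α) ^ i := summable_geometric_of_lt_one hq0 hq1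
    calc ∑ i ∈ Finset.range K, L i * r ^ n i
        ≤ ∑ i ∈ Finset.range K, X * (1 / α) ^ (K - 1 - i) := Finset.sum_le_sum hterm
      _ = X * ∑ i ∈ Finset.range K, (1 / α) ^ (K - 1 - i) := by rw [← Finset.mul_sum]
      _ = X * ∑ i ∈ Finset.range K, (1 / α) ^ i := by
          rw [Finset.sum_range_reflect (fun i => (1 / α) ^ i) K]
      _ ≤ X * ∑' i : ℕ, (1 / α) ^ i := by
          apply mul_le_mul_of_nonneg_left _ hXpos.le
          exact Summable.sum_le_tsum (Finset.range K) (fun i _ => pow_nonneg hq0 i) hgeo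
      _ = X * (1 - 1 / α)⁻¹ := by rw [tsum_geometric_of_lt_one hq0 hq1]
      _ = (1 - 1 / α)⁻¹ * X := mul_comm _ _
  -- L K bound
  have hLK : L K ≤ (α * β + L 0) * X := by
    rcases Nat.eq_zero_or_pos K with hK0 | hKpos
    · rw [hK0]
      nlinarith [hLpos 0, hX1, hXpos]
    · have he : K - 1 + 1 = K := Nat.succ_pred_eq_of_pos hKpos
      have h1 : L K ≤ (α * β) * L (K - 1) := by
        have := hLstep' (K - 1); rwa [he] at this
      have h2 : L (K - 1) ≤ X := hLlt (K - 1) (by omega)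
      nlinarith [hLpos 0, hXpos, hLpos (K - 1)]
  -- tail bound
  have htail : ∑' j, L (j + K) * r ^ n (j + K) ≤ (α * β + L 0) * (2 * D) * X := by
    have hterm : ∀ j : ℕ, L (j + K) * r ^ n (j + K) ≤ (L K * D) * (1 / 2) ^ j := by
      intro j
      have h1 : L (j + K) ≤ (α * β) ^ j * L K := hLgeom' K j
      have h2 : r ^ n (j + K) ≤ Real.exp (-(t * n (j + K))) := hrexp _
      have hαj1 : (1 : ℝ) ≤ α ^ j := one_le_pow₀ hα.le
      have h3 : (2 : ℝ) ^ (α ^ j - 1) ≤ t * n (j + K) := by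
        have h4 : ((n K : ℝ)) ^ (α ^ j) ≤ (n (j + K) : ℝ) := hngeom K j
        have h5 : ((n K : ℝ)) ^ (α ^ j) = (n K : ℝ) * (n K : ℝ) ^ (α ^ j - 1) := by
          have h5' := Real.rpow_add (hnpos K) 1 (α ^ j - 1)
          rw [Real.rpow_one] at h5'
          rw [show (1 : ℝ) + (α ^ j - 1) = α ^ j by ring] at h5'
          exact h5'
        have h6 : (2 : ℝ) ^ (α ^ j - 1) ≤ (n K : ℝ) ^ (α ^ j - 1) := by
          apply Real.rpow_le_rpow (by norm_num) _ (by linarith)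
          exact_mod_cast hn2 K
        have h7 : 1 ≤ t * (n K : ℝ) := by
          rw [div_lt_iff₀ ht0] at hKspec
          nlinarith
        calc (2 : ℝ) ^ (α ^ j - 1) ≤ (n K : ℝ) ^ (α ^ j - 1) := h6
          _ ≤ (t * n K) * (n K : ℝ) ^ (α ^ j - 1) := by
              nlinarith [Real.rpow_nonneg (hnpos K).le (α ^ j - 1),
                Real.rpow_pos_of_pos (hnpos K) (α ^ j - 1)]
          _ = t * ((n K : ℝ) ^ (α ^ j)) := by rw [h5]; ring
          _ ≤ t * n (j + K) := mul_le_mul_of_nonneg_left h4 ht0.le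
      have h8 : Real.exp (-(t * n (j + K))) ≤ Real.exp (-(2 : ℝ) ^ (α ^ j - 1)) :=
        Real.exp_le_exp.mpr (by linarith)
      have h9 : r ^ n (j + K) ≤ Real.exp (-(2 : ℝ) ^ (α ^ j - 1)) := h2.trans h8
      calc L (j + K) * r ^ n (j + K)
          ≤ ((α * β) ^ j * L K) * Real.exp (-(2 : ℝ) ^ (α ^ j - 1)) := by
            apply mul_le_mul h1 h9 (pow_nonneg hr0 _)
            positivity
        _ = L K * ((α * β) ^ j * Real.exp (-(2 : ℝ) ^ (α ^ j - 1))) := by ring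
        _ ≤ L K * (D * (1 / 2) ^ j) := mul_le_mul_of_nonneg_left (hD j) (hLpos K).le
        _ = (L K * D) * (1 / 2) ^ j := by ring
    have hsumtail : Summable fun j => L (j + K) * r ^ n (j + K) :=
      (summable_nat_add_iff K).mpr hsum
    have hsumgeo : Summable fun j : ℕ => (L K * D) * (1 / 2) ^ j :=
      (summable_geometric_of_lt_one (by norm_num) (by norm_num)).mul_left _
    have h12 : ((1 : ℝ) - 1 / 2)⁻¹ = 2 := by norm_num
    calc ∑' j, L (j + K) * r ^ n (j + K)
        ≤ ∑' j : ℕ, (L K * D) * (1 / 2) ^ j := Summable.tsum_le_tsum hterm hsumtail hsumgeo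
      _ = (L K * D) * (1 - 1 / 2 : ℝ)⁻¹ := by
          rw [tsum_mul_left, tsum_geometric_of_lt_one (by norm_num) (by norm_num)]
      _ = L K * (2 * D) := by rw [h12]; ring
      _ ≤ ((α * β + L 0) * X) * (2 * D) := by nlinarith [hDpos]
      _ = (α * β + L 0) * (2 * D) * X := by ring
  calc ∑' k, L k * r ^ n k
      = ∑ i ∈ Finset.range K, L i * r ^ n i + ∑' j, L (j + K) * r ^ n (j + K) := hsplit.symm
    _ ≤ (1 - 1 / α)⁻¹ * X + (α * β + L 0) * (2 * D) * X := add_le_add hhead htail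
    _ = ((1 - 1 / α)⁻¹ + (α * β + L 0) * (2 * D)) * X := by ring

end AuxLemmas

/-- If the exponents satisfy `n_k^α ≤ n_{k+1} ≤ n_k^{αβ}` with `α, β > 1` and
`|a_k|/log n_k → 0`, then `f(z) = Σ a_k z^{n_k}` is analytic on the unit disk and
`|f(z)|/log(e/(1-|z|)) → 0` as `|z| → 1⁻`. -/
theorem X0_of_coeff_limit (a : ℕ → ℂ) (n : ℕ → ℕ) (α β : ℝ)
    (hα : 1 < α) (hβ : 1 < β) (hn2 : ∀ k, 2 ≤ n k)
    (hgap : ∀ k, ((n k : ℝ)) ^ α ≤ (n (k + 1) : ℝ) ∧ (n (k + 1) : ℝ) ≤ ((n k : ℝ)) ^ (α * β))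
    (hcoeff : Tendsto (fun k => ‖a k‖ / Real.log (n k)) atTop (nhds 0)) :
    DifferentiableOn ℂ (fun z => ∑' k : ℕ, a k * z ^ n k) (ball (0 : ℂ) 1) ∧
      ∀ ε : ℝ, 0 < ε → ∃ δ : ℝ, δ < 1 ∧ ∀ z ∈ ball (0 : ℂ) 1, δ < ‖z‖ →
        ‖∑' k : ℕ, a k * z ^ n k‖ / Real.log (Real.exp 1 / (1 - ‖z‖)) < ε := by
  have hs : StrictMono n := aux_strictMono hα hn2 fun k => (hgap k).1
  have hnpos : ∀ k, (0 : ℝ) < (n k : ℝ) := fun k => by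
    have := hn2 k; exact_mod_cast lt_of_lt_of_le two_pos this
  have hn1 : ∀ k, (1 : ℝ) < (n k : ℝ) := fun k => by
    have := hn2 k; exact_mod_cast lt_of_lt_of_le one_lt_two (by exact_mod_cast this)
  have hLpos : ∀ k, 0 < Real.log (n k) := fun k => Real.log_pos (hn1 k)
  have hLn : ∀ k, Real.log (n k) ≤ (n k : ℝ) := fun k => by
    linarith [Real.log_le_sub_one_of_pos (hnpos k)]
  -- bounded coefficients
  obtain ⟨B, hB0, hB⟩ : ∃ B : ℝ, 0 ≤ B ∧ ∀ k, ‖a k‖ ≤ B * Real.log (n k) := by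
    obtain ⟨N, hN⟩ := eventually_atTop.mp
      (hcoeff.eventually_lt_const (show (0 : ℝ) < 1 by norm_num))
    refine ⟨1 + ∑ i ∈ Finset.range N, ‖a i‖ / Real.log (n i), by positivity, fun k => ?_⟩
    have hk0 : ∀ i, 0 ≤ ‖a i‖ / Real.log (n i) := fun i =>
      div_nonneg (norm_nonneg _) (hLpos i).le
    have hsum0 : 0 ≤ ∑ i ∈ Finset.range N, ‖a i‖ / Real.log (n i) :=
      Finset.sum_nonneg fun i _ => hk0 i
    have h1 : ‖a k‖ / Real.log (n k) ≤ 1 + ∑ i ∈ Finset.range N, ‖a i‖ / Real.log (n i) := by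
      rcases le_or_gt N k with h | h
      · linarith [hN k h]
      · have := Finset.single_le_sum (f := fun i => ‖a i‖ / Real.log (n i))
          (fun i _ => hk0 i) (Finset.mem_range.mpr h)
        linarith
    calc ‖a k‖ = (‖a k‖ / Real.log (n k)) * Real.log (n k) :=
          (div_mul_cancel₀ _ (hLpos k).ne').symm
      _ ≤ _ := mul_le_mul_of_nonneg_right h1 (hLpos k).le
  -- summability of the norms
  have hsummable : ∀ r : ℝ, 0 ≤ r → r < 1 → Summable fun k => ‖a k‖ * r ^ n k := by
    intro r h0 h1
    have hg : Summable fun k => (n k : ℝ) * r ^ n k := aux_summable hs h0 h1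
    refine Summable.of_nonneg_of_le (fun k => mul_nonneg (norm_nonneg _) (pow_nonneg h0 _))
      (fun k => ?_) (hg.mul_left B)
    calc ‖a k‖ * r ^ n k ≤ (B * Real.log (n k)) * r ^ n k :=
          mul_le_mul_of_nonneg_right (hB k) (pow_nonneg h0 _)
      _ ≤ (B * (n k : ℝ)) * r ^ n k := by
          apply mul_le_mul_of_nonneg_right _ (pow_nonneg h0 _)
          exact mul_le_mul_of_nonneg_left (hLn k) hB0
      _ = B * ((n k : ℝ) * r ^ n k) := by ring
  have hsummable' : ∀ z : ℂ, ‖z‖ < 1 → Summable fun k => ‖a k * z ^ n k‖ := by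
    intro z hz
    have := hsummable ‖z‖ (norm_nonneg z) hz
    simpa [norm_mul, norm_pow] using this
  constructor
  · -- differentiability
    intro z hz
    rw [mem_ball_zero_iff] at hz
    set r' : ℝ := (‖z‖ + 1) / 2 with hr'def
    have hr'1 : r' < 1 := by rw [hr'def]; linarith
    have hzr' : ‖z‖ < r' := by rw [hr'def]; linarith [norm_nonneg z]
    have hr'0 : 0 ≤ r' := by positivity
    have hsum' : Summable fun k => ‖a k‖ * r' ^ n k := hsummable r' hr'0 hr'1
    have hdiff : DifferentiableOn ℂ (fun w => ∑' k, a k * w ^ n k) (ball (0 : ℂ) r') := by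
      apply Complex.differentiableOn_tsum_of_summable_norm hsum'
        (fun i => ((differentiable_pow (n i)).const_mul (a i)).differentiableOn) isOpen_ball
      intro i w hw
      rw [mem_ball_zero_iff] at hw
      rw [norm_mul, norm_pow]
      exact mul_le_mul_of_nonneg_left
        (pow_le_pow_left₀ (norm_nonneg w) hw.le _) (norm_nonneg _)
    exact (hdiff.differentiableAt (isOpen_ball.mem_nhds (mem_ball_zero_iff.mpr hzr'))).differentiableWithinAt
  · -- boundary growth
    obtain ⟨C, hC, hkey⟩ := aux_key n α β hα hβ hn2 hgap
    intro ε hε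
    have hεC : (0 : ℝ) < ε / (2 * C) := by positivity
    obtain ⟨K₀, hK₀⟩ := eventually_atTop.mp (hcoeff.eventually_lt_const hεC)
    set A : ℝ := ∑ i ∈ Finset.range K₀, ‖a i‖ with hAdef
    have hA0 : 0 ≤ A := Finset.sum_nonneg fun i _ => norm_nonneg _
    set M : ℝ := 2 * A / ε + 1 with hMdef
    refine ⟨1 - Real.exp (1 - M), by nlinarith [Real.exp_pos (1 - M)], ?_⟩
    intro z hz hδz
    rw [mem_ball_zero_iff] at hz
    set r : ℝ := ‖z‖ with hrdef
    have hr0 : 0 ≤ r := norm_nonneg z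
    have ht0 : 0 < 1 - r := by linarith
    set X : ℝ := Real.log (Real.exp 1 / (1 - r)) with hXdef
    have hXM : M < X := by
      rw [hXdef, Real.lt_log_iff_exp_lt (by positivity), lt_div_iff₀ ht0]
      have h1 : 1 - r < Real.exp (1 - M) := by linarith
      calc Real.exp M * (1 - r) < Real.exp M * Real.exp (1 - M) :=
            mul_lt_mul_of_pos_left h1 (Real.exp_pos M)
        _ = Real.exp 1 := by rw [← Real.exp_add]; ring_nf
    have hM1 : 1 ≤ M := by
      rw [hMdef]
      have : 0 ≤ 2 * A / ε := by positivity
      linarith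
    have hXpos : 0 < X := by linarith
    have hsumnorm := hsummable' z hz
    have h1 : ‖∑' k, a k * z ^ n k‖ ≤ ∑' k, ‖a k‖ * r ^ n k := by
      have h := norm_tsum_le_tsum_norm hsumnorm
      simp only [norm_mul, norm_pow] at h
      exact h
    have hsum2 : Summable fun k => ‖a k‖ * r ^ n k := hsummable r hr0 hz
    have hsumg : Summable fun k => Real.log (n k) * r ^ n k := aux_summable_log hs hn2 hr0 hz
    have hsplit := Summable.sum_add_tsum_nat_add K₀ hsum2
    have hhead : ∑ i ∈ Finset.range K₀, ‖a i‖ * r ^ n i ≤ A := by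
      rw [hAdef]
      apply Finset.sum_le_sum
      intro i _
      calc ‖a i‖ * r ^ n i ≤ ‖a i‖ * 1 :=
            mul_le_mul_of_nonneg_left (pow_le_one₀ hr0 hz.le) (norm_nonneg _)
        _ = ‖a i‖ := mul_one _
    have hgsplit := Summable.sum_add_tsum_nat_add K₀ hsumg
    have hghead : 0 ≤ ∑ i ∈ Finset.range K₀, Real.log (n i) * r ^ n i :=
      Finset.sum_nonneg fun i _ => mul_nonneg (hLpos i).le (pow_nonneg hr0 _)
    have htail : ∑' j, ‖a (j + K₀)‖ * r ^ n (j + K₀) ≤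
        (ε / (2 * C)) * ∑' k, Real.log (n k) * r ^ n k := by
      have hterm : ∀ j : ℕ, ‖a (j + K₀)‖ * r ^ n (j + K₀) ≤
          (ε / (2 * C)) * (Real.log (n (j + K₀)) * r ^ n (j + K₀)) := by
        intro j
        have h2 := hK₀ (j + K₀) (by omega)
        rw [div_lt_iff₀ (hLpos _)] at h2
        have h3 : ‖a (j + K₀)‖ ≤ ε / (2 * C) * Real.log (n (j + K₀)) := h2.le
        calc ‖a (j + K₀)‖ * r ^ n (j + K₀)
            ≤ (ε / (2 * C) * Real.log (n (j + K₀))) * r ^ n (j + K₀) :=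
              mul_le_mul_of_nonneg_right h3 (pow_nonneg hr0 _)
          _ = (ε / (2 * C)) * (Real.log (n (j + K₀)) * r ^ n (j + K₀)) := by ring
      have hst : Summable fun j => ‖a (j + K₀)‖ * r ^ n (j + K₀) :=
        (summable_nat_add_iff K₀).mpr hsum2
      have hst2 : Summable fun j => (ε / (2 * C)) * (Real.log (n (j + K₀)) * r ^ n (j + K₀)) :=
        ((summable_nat_add_iff K₀).mpr hsumg).mul_left _
      calc ∑' j, ‖a (j + K₀)‖ * r ^ n (j + K₀)
          ≤ ∑' j, (ε / (2 * C)) * (Real.log (n (j + K₀)) * r ^ n (j + K₀)) :=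
            Summable.tsum_le_tsum hterm hst hst2
        _ = (ε / (2 * C)) * ∑' j, Real.log (n (j + K₀)) * r ^ n (j + K₀) := tsum_mul_left
        _ ≤ (ε / (2 * C)) * ∑' k, Real.log (n k) * r ^ n k := by
            apply mul_le_mul_of_nonneg_left _ hεC.le
            linarith
    have hfull : ∑' k, Real.log (n k) * r ^ n k ≤ C * X := hkey r hr0 hz
    have h2 : ‖∑' k, a k * z ^ n k‖ ≤ A + (ε / (2 * C)) * (C * X) := by
      have h5 : (ε / (2 * C)) * (∑' k, Real.log (n k) * r ^ n k) ≤ (ε / (2 * C)) * (C * X) :=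
        mul_le_mul_of_nonneg_left hfull hεC.le
      linarith
    have h3 : (ε / (2 * C)) * (C * X) = ε * X / 2 := by
      field_simp
    have h4 : A < ε * X / 2 := by
      have h6 : 2 * A / ε < X - 1 := by rw [hMdef] at hXM; linarith
      rw [div_lt_iff₀ hε] at h6
      nlinarith
    rw [div_lt_iff₀ hXpos]
    calc ‖∑' k, a k * z ^ n k‖ ≤ A + ε * X / 2 := by rw [← h3]; exact h2
      _ < ε * X := by linarith
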